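/- Suppose that for each i ∈ {1,2} there is at most one j ∈ {1,…,n} with q_{ij} ≠ 0. Let t be a nonempty n-colored rooted tree in which every vertex has at most one incoming edge of each color. Then every subforest s of t with q(s,t) ≠ 0 has the property that both s and its complement s^c are connected (each is either empty or a single rooted tree), and each of them is again a tree in which every vertex has at most one incoming edge of each color (with the induced subforest coloring). Consequently the coproduct Δ(t) = Σ_{s ⊆ t} q(s,t) · s ⊗ s^c restricts to the subspace of C_n spanned by 1 and by single rooted trees with at most one incoming edge of each color at each vertex. -/

import Mathlib

/- STATEMENT 10: if each row of parameters has at most one nonzero entry,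
then in a tree with at most one incoming edge of each color at each
vertex, any subforest with nonzero coefficient and its complement are
connected and again have at most one incoming edge of each color;
consequently Δ restricts to the span of 1 and such trees. -/



/- Core combinatorics of n-edge-colored rooted forests.

A forest is encoded by a finite set of vertices (natural numbers), a
parent function (pointing one step towards the root) and a coloring
function assigning to each non-root vertex the color of the edge
connecting it to its parent.  Well-formedness (`WF`) asks that the parent
function is supported on the vertex set and is acyclic. -/

open scoped Classical

noncomputable section

structure PForest (n : ℕ) where
  verts : Finset ℕ
  parent : ℕ → Option ℕ
  color : ℕ → Fin n

namespace PForest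

variable {n : ℕ}

/-- well-formedness: edges join vertices, and the parent relation is
acyclic. -/
def WF (t : PForest n) : Prop :=
  (∀ v w : ℕ, t.parent v = some w → v ∈ t.verts ∧ w ∈ t.verts) ∧
    ∃ rk : ℕ → ℕ, ∀ v w : ℕ, t.parent v = some w → rk w < rk v

/-- one step towards the root: `w` is the parent of `v`. -/
def Step (t : PForest n) (v w : ℕ) : Prop := t.parent v = some w

/-- `w` lies (weakly) on the path from `v` to the root of its component. -/
def Anc (t : PForest n) (v w : ℕ) : Prop := Relation.ReflTransGen t.Step v w

def nearestAncAux (t : PForest n) (S : Finset ℕ) : ℕ → ℕ → Option ℕ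
  | 0, _ => none
  | fuel + 1, v =>
    match t.parent v with
    | none => none
    | some w => if w ∈ S then some w else nearestAncAux t S fuel w

/-- the first vertex of `S` strictly below `v`; this is the parent of `v`
in the subforest induced on `S`. -/
def nearestAnc (t : PForest n) (S : Finset ℕ) (v : ℕ) : Option ℕ :=
  nearestAncAux t S t.verts.card v

def lastBeforeAux (t : PForest n) (S : Finset ℕ) : ℕ → ℕ → ℕ
  | 0, v => v
  | fuel + 1, v =>
    match t.parent v with
    | none => v
    | some w => if w ∈ S then v else lastBeforeAux t S fuel w

/-- the last vertex on the path from `v` down to `nearestAnc t S v`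
before reaching it; the color of the edge of the induced subforest below
`v` is the (ambient) color of this vertex. -/
def lastBefore (t : PForest n) (S : Finset ℕ) (v : ℕ) : ℕ :=
  lastBeforeAux t S t.verts.card v

/-- `pcount t S s j v` is the number of edges of (induced) color `j` on
the path from `v` to the root of its component in the subforest of `t`
induced on `S`, whose lower vertex lies outside `s`.  (Edges of the
induced subforest are indexed by their upper vertex `x`; the lower vertex
is `nearestAnc t S x` and the induced color is the ambient color of
`lastBefore t S x`.) -/
def pcount (t : PForest n) (S s : Finset ℕ) (j : Fin n) (v : ℕ) : ℕ :=
  (S.filter fun x => t.Anc v x ∧ t.color (t.lastBefore S x) = j ∧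
      ∃ w, t.nearestAnc S x = some w ∧ w ∉ s).card

/-- the subforest of `u` induced on `S`, as a forest in its own right. -/
def restrict (u : PForest n) (S : Finset ℕ) : PForest n where
  verts := S ∩ u.verts
  parent := fun v => if v ∈ S ∩ u.verts then u.nearestAnc S v else none
  color := fun v => u.color (u.lastBefore S v)

/-- a forest is a (nonempty) tree when it has exactly one root. -/
def IsTree (t : PForest n) : Prop :=
  (t.verts.filter fun v => t.parent v = none).card = 1

/-- `e` is an isomorphism of n-colored forests from `s` to `t`: a
bijection of the vertices preserving the parent relation and the colors
of edges. -/
def IsIsoFn (s t : PForest n) (e : {x // x ∈ s.verts} ≃ {x // x ∈ t.verts}) : Prop :=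
  (∀ v w : {x // x ∈ s.verts},
      s.parent (v : ℕ) = some (w : ℕ) ↔ t.parent ((e v : ℕ)) = some ((e w : ℕ))) ∧
    ∀ v : {x // x ∈ s.verts}, (s.parent (v : ℕ)).isSome →
      t.color ((e v : ℕ)) = s.color (v : ℕ)

/-- isomorphism of n-colored forests. -/
def PIso (s t : PForest n) : Prop := ∃ e, IsIsoFn s t e

end PForest

/-- a (well-formed, nonempty) n-colored rooted tree. -/
def TreeObj (n : ℕ) : Type := {t : PForest n // t.WF ∧ t.IsTree}

/-- isomorphism classes of n-colored rooted trees. -/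
def TreeClass (n : ℕ) : Type := Quot fun a b : TreeObj n => PForest.PIso a.1 b.1

/-- the one-vertex tree. -/
def unitTree (n : ℕ) [NeZero n] : PForest n :=
  ⟨{0}, fun _ => none, fun _ => 0⟩

theorem unitTree_wf (n : ℕ) [NeZero n] : (unitTree n).WF :=
  ⟨fun v w h => by simp [unitTree] at h, ⟨id, fun v w h => by simp [unitTree] at h⟩⟩

theorem unitTree_isTree (n : ℕ) [NeZero n] : (unitTree n).IsTree := by
  simp [PForest.IsTree, unitTree]

def defaultTreeObj (n : ℕ) [NeZero n] : TreeObj n :=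
  ⟨unitTree n, unitTree_wf n, unitTree_isTree n⟩

/-- the isomorphism class of a tree (junk value: the class of the
one-vertex tree, if the given forest is not a well-formed tree). -/
def mkClass {n : ℕ} [NeZero n] (t : PForest n) : TreeClass n :=
  if h : t.WF ∧ t.IsTree then Quot.mk _ (⟨t, h⟩ : TreeObj n)
  else Quot.mk _ (defaultTreeObj n)

end

noncomputable section

open PForest TensorProduct

variable (K : Type*) [Field K] {n : ℕ}

namespace PForest

/-- the component of the subforest induced on `S` rooted at `r`: the set
of `x ∈ S` whose path to the root passes through `r`. -/
def compSet (u : PForest n) (S : Finset ℕ) (r : ℕ) : Finset ℕ :=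
  S.filter fun x => u.Anc x r

/-- the roots of the subforest induced on `S`: the elements of `S` with
no further element of `S` strictly below them. -/
def sroots (u : PForest n) (S : Finset ℕ) : Finset ℕ :=
  S.filter fun r => ∀ w ∈ S, u.Anc r w → w = r

end PForest

/-- `C_n`: the polynomial algebra on the isomorphism classes of
n-colored rooted trees; its monomial basis is given by the (isomorphism
classes of) n-colored forests. -/
abbrev Cn (K : Type*) [Field K] (n : ℕ) : Type _ := MvPolynomial (TreeClass n) K

/-- the basis monomial of `C_n` corresponding to the subforest of `u`
induced on `S`: the product of the classes of its components. -/
def forestMonomial [NeZero n] (u : PForest n) (S : Finset ℕ) : Cn K n :=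
  ∏ r ∈ PForest.sroots u S, MvPolynomial.X (mkClass (u.restrict (PForest.compSet u S r)))

/-- the coefficient `q(s,T)` (for `s` a subforest of the subforest of `u`
induced on `T`), for parameters `q1 j = q_{1j}`, `q2 j = q_{2j}`:
`q(s,T) = ∏_j q_{1j}^{Σ_{v∈s} p_j(v,s,T)} · ∏_j q_{2j}^{Σ_{v∈T∖s} p_j(v,T∖s,T)}`. -/
def qcoef (q1 q2 : Fin n → K) (u : PForest n) (T s : Finset ℕ) : K :=
  (∏ j : Fin n, q1 j ^ ∑ v ∈ s, u.pcount T s j v) *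
    ∏ j : Fin n, q2 j ^ ∑ v ∈ T \ s, u.pcount T (T \ s) j v

/-- `Δ(t) = Σ_{s ⊆ t} q(s,t) · s ⊗ s^c`, for a concrete forest `u`. -/
def subforestSum [NeZero n] (q1 q2 : Fin n → K) (u : PForest n) :
    Cn K n ⊗[K] Cn K n :=
  ∑ S ∈ u.verts.powerset,
    qcoef K q1 q2 u u.verts S •
      (forestMonomial K u S ⊗ₜ[K] forestMonomial K u (u.verts \ S))

/-- the comultiplication of `C_n`, as the algebra map determined by the
subforest formula on (representatives of) tree classes. -/
def DeltaC [NeZero n] (q1 q2 : Fin n → K) :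
    Cn K n →ₐ[K] Cn K n ⊗[K] Cn K n :=
  MvPolynomial.aeval fun T => subforestSum K q1 q2 (Quot.out T).1

/-- the counit of `C_n`: the algebra map vanishing on every tree. -/
def epsC [NeZero n] : Cn K n →ₐ[K] K :=
  MvPolynomial.aeval fun _ : TreeClass n => (0 : K)

end

namespace PForest

/-- every vertex has at most one incoming edge of each color. -/
def Slim {n : ℕ} (t : PForest n) : Prop :=
  ∀ v ∈ t.verts, ∀ j : Fin n,
    (t.verts.filter fun x => t.parent x = some v ∧ t.color x = j).card ≤ 1

/-- the number of connected components of the subforest of u induced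
on S (counted by their roots). -/
def rootCount {n : ℕ} (u : PForest n) (S : Finset ℕ) : ℕ :=
  (S.filter fun x => u.nearestAnc S x = none).card

end PForest

/-- the isomorphism class of a slim tree. -/
def IsSlimClass {n : ℕ} (T : TreeClass n) : Prop :=
  ∃ a : TreeObj n, a.1.Slim ∧ Quot.mk _ a = T

/-- the span of 1 and the single rooted trees with at most one incoming
edge of each color at each vertex. -/
noncomputable def slimSpan (K : Type*) [Field K] (n : ℕ) : Submodule K (Cn K n) :=
  Submodule.span K
    ({1} ∪ {p | ∃ T : TreeClass n, IsSlimClass T ∧ p = MvPolynomial.X T})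

/- ------------------------------------------------------------------ -/
/- Auxiliary development for the proof of `slim_trees_preserved`.     -/
/- ------------------------------------------------------------------ -/

noncomputable section AuxDev

open Relation

namespace PForest

variable {n : ℕ} {u : PForest n} {A : Finset ℕ}

theorem step_mem' (hu : u.WF) {v w : ℕ} (h : u.Step v w) : v ∈ u.verts ∧ w ∈ u.verts :=
  hu.1 v w h

theorem step_det {v w w' : ℕ} (h : u.Step v w) (h' : u.Step v w') : w = w' := by
  unfold Step at h h'
  rw [h] at h'
  exact Option.some_inj.mp h'

theorem transGen_mem (hu : u.WF) {v w : ℕ} (h : TransGen u.Step v w) :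
    v ∈ u.verts ∧ w ∈ u.verts := by
  induction h with
  | single h => exact step_mem' hu h
  | tail _ h2 ih => exact ⟨ih.1, (step_mem' hu h2).2⟩

theorem anc_mem (hu : u.WF) {v w : ℕ} (hv : v ∈ u.verts) (h : u.Anc v w) : w ∈ u.verts := by
  rcases reflTransGen_iff_eq_or_transGen.mp h with rfl | h'
  · exact hv
  · exact (transGen_mem hu h').2

theorem rk_lt {rk : ℕ → ℕ} (hrk : ∀ v w, u.parent v = some w → rk w < rk v)
    {v w : ℕ} (h : TransGen u.Step v w) : rk w < rk v := by
  induction h with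
  | single h => exact hrk _ _ h
  | tail _ h2 ih => exact lt_trans (hrk _ _ h2) ih

theorem transGen_irrefl (hu : u.WF) (v : ℕ) : ¬ TransGen u.Step v v := by
  obtain ⟨rk, hrk⟩ := hu.2
  exact fun h => lt_irrefl _ (rk_lt hrk h)

theorem transGen_head_decomp {v w : ℕ} (h : TransGen u.Step v w) :
    ∃ c, u.Step v c ∧ u.Anc c w := by
  induction h with
  | single h => exact ⟨_, h, ReflTransGen.refl⟩
  | tail _ h2 ih =>
    obtain ⟨c, hc1, hc2⟩ := ih
    exact ⟨c, hc1, hc2.tail h2⟩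

open scoped Classical in
/-- number of strict ancestors of `v`; decreases along `Step`. -/
def hgt (t : PForest n) (v : ℕ) : ℕ :=
  (t.verts.filter fun w => TransGen t.Step v w).card

theorem hgt_step (hu : u.WF) {v w : ℕ} (h : u.Step v w) : u.hgt w < u.hgt v := by
  apply Finset.card_lt_card
  rw [Finset.ssubset_iff_of_subset]
  · exact ⟨w, Finset.mem_filter.mpr ⟨(step_mem' hu h).2, TransGen.single h⟩,
      fun hc => transGen_irrefl hu w (Finset.mem_filter.mp hc).2⟩
  · intro z hz
    obtain ⟨hz1, hz2⟩ := Finset.mem_filter.mp hz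
    exact Finset.mem_filter.mpr ⟨hz1, TransGen.head h hz2⟩

theorem hgt_transGen (hu : u.WF) {v w : ℕ} (h : TransGen u.Step v w) : u.hgt w < u.hgt v := by
  induction h with
  | single h => exact hgt_step hu h
  | tail _ h2 ih => exact lt_trans (hgt_step hu h2) ih

theorem hgt_lt_card (hu : u.WF) {v : ℕ} (hv : v ∈ u.verts) : u.hgt v < u.verts.card := by
  have hsub : (u.verts.filter fun w => TransGen u.Step v w) ⊆ u.verts.erase v := by
    intro z hz
    obtain ⟨hz1, hz2⟩ := Finset.mem_filter.mp hz
    exact Finset.mem_erase.mpr ⟨fun he => transGen_irrefl hu v (he ▸ hz2), hz1⟩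
  exact lt_of_le_of_lt (Finset.card_le_card hsub) (Finset.card_erase_lt_of_mem hv)

theorem nearestAncAux_stable (hu : u.WF) :
    ∀ (f : ℕ) (v : ℕ), u.hgt v < f → u.nearestAncAux A f v = u.nearestAncAux A (f + 1) v := by
  intro f
  induction f with
  | zero => exact fun v h => absurd h (Nat.not_lt_zero _)
  | succ f ih =>
    intro v h
    cases hp : u.parent v with
    | none => simp [nearestAncAux, hp]
    | some w =>
      by_cases hw : w ∈ A
      · simp [nearestAncAux, hp, hw]
      · simp only [nearestAncAux, hp, hw, if_neg, ite_false]
        exact ih w (lt_of_lt_of_le (hgt_step hu hp) (Nat.lt_succ_iff.mp h))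

theorem nearestAncAux_le (hu : u.WF) {f g v : ℕ} (hf : u.hgt v < f) (hfg : f ≤ g) :
    u.nearestAncAux A f v = u.nearestAncAux A g v := by
  induction g with
  | zero => exact absurd (lt_of_lt_of_le hf hfg) (Nat.not_lt_zero _)
  | succ g ih =>
    rcases eq_or_lt_of_le hfg with rfl | hlt
    · rfl
    · have hfg' : f ≤ g := Nat.lt_succ_iff.mp hlt
      exact (ih hfg').trans (nearestAncAux_stable hu g v (lt_of_lt_of_le hf hfg'))

theorem nearestAnc_eq_aux (hu : u.WF) {v : ℕ} (hv : v ∈ u.verts) (f : ℕ) (hf : u.hgt v < f) :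
    u.nearestAnc A v = u.nearestAncAux A f v := by
  unfold nearestAnc
  rcases le_total u.verts.card f with h | h
  · exact nearestAncAux_le hu (hgt_lt_card hu hv) h
  · exact (nearestAncAux_le hu hf h).symm

theorem nearestAnc_none' (hu : u.WF) {v : ℕ} (hv : v ∈ u.verts) (hp : u.parent v = none) :
    u.nearestAnc A v = none := by
  rw [nearestAnc_eq_aux hu hv (u.hgt v + 1) (Nat.lt_succ_self _)]
  simp [nearestAncAux, hp]

theorem nearestAnc_memS (hu : u.WF) {v w : ℕ} (hv : v ∈ u.verts) (hp : u.parent v = some w)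
    (hw : w ∈ A) : u.nearestAnc A v = some w := by
  rw [nearestAnc_eq_aux hu hv (u.hgt v + 1) (Nat.lt_succ_self _)]
  simp [nearestAncAux, hp, hw]

theorem nearestAnc_step (hu : u.WF) {v w : ℕ} (hv : v ∈ u.verts) (hp : u.parent v = some w)
    (hw : w ∉ A) : u.nearestAnc A v = u.nearestAnc A w := by
  rw [nearestAnc_eq_aux hu hv (u.hgt v + 1) (Nat.lt_succ_self _)]
  simp only [nearestAncAux, hp, hw, if_neg, ite_false]
  exact (nearestAnc_eq_aux hu (step_mem' hu hp).2 (u.hgt v) (hgt_step hu hp)).symm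

theorem lastBeforeAux_stable (hu : u.WF) :
    ∀ (f : ℕ) (v : ℕ), u.hgt v < f → u.lastBeforeAux A f v = u.lastBeforeAux A (f + 1) v := by
  intro f
  induction f with
  | zero => exact fun v h => absurd h (Nat.not_lt_zero _)
  | succ f ih =>
    intro v h
    cases hp : u.parent v with
    | none => simp [lastBeforeAux, hp]
    | some w =>
      by_cases hw : w ∈ A
      · simp [lastBeforeAux, hp, hw]
      · simp only [lastBeforeAux, hp, hw, if_neg, ite_false]
        exact ih w (lt_of_lt_of_le (hgt_step hu hp) (Nat.lt_succ_iff.mp h))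

theorem lastBeforeAux_le (hu : u.WF) {f g v : ℕ} (hf : u.hgt v < f) (hfg : f ≤ g) :
    u.lastBeforeAux A f v = u.lastBeforeAux A g v := by
  induction g with
  | zero => exact absurd (lt_of_lt_of_le hf hfg) (Nat.not_lt_zero _)
  | succ g ih =>
    rcases eq_or_lt_of_le hfg with rfl | hlt
    · rfl
    · have hfg' : f ≤ g := Nat.lt_succ_iff.mp hlt
      exact (ih hfg').trans (lastBeforeAux_stable hu g v (lt_of_lt_of_le hf hfg'))

theorem lastBefore_eq_aux (hu : u.WF) {v : ℕ} (hv : v ∈ u.verts) (f : ℕ) (hf : u.hgt v < f) :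
    u.lastBefore A v = u.lastBeforeAux A f v := by
  unfold lastBefore
  rcases le_total u.verts.card f with h | h
  · exact lastBeforeAux_le hu (hgt_lt_card hu hv) h
  · exact (lastBeforeAux_le hu hf h).symm

theorem lastBefore_none' (hu : u.WF) {v : ℕ} (hv : v ∈ u.verts) (hp : u.parent v = none) :
    u.lastBefore A v = v := by
  rw [lastBefore_eq_aux hu hv (u.hgt v + 1) (Nat.lt_succ_self _)]
  simp [lastBeforeAux, hp]

theorem lastBefore_memS (hu : u.WF) {v w : ℕ} (hv : v ∈ u.verts) (hp : u.parent v = some w)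
    (hw : w ∈ A) : u.lastBefore A v = v := by
  rw [lastBefore_eq_aux hu hv (u.hgt v + 1) (Nat.lt_succ_self _)]
  simp [lastBeforeAux, hp, hw]

theorem lastBefore_step (hu : u.WF) {v w : ℕ} (hv : v ∈ u.verts) (hp : u.parent v = some w)
    (hw : w ∉ A) : u.lastBefore A v = u.lastBefore A w := by
  rw [lastBefore_eq_aux hu hv (u.hgt v + 1) (Nat.lt_succ_self _)]
  simp only [lastBeforeAux, hp, hw, if_neg, ite_false]
  exact (lastBefore_eq_aux hu (step_mem' hu hp).2 (u.hgt v) (hgt_step hu hp)).symm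

theorem nearestAnc_sound (hu : u.WF) {v : ℕ} (hv : v ∈ u.verts) {w : ℕ}
    (hna : u.nearestAnc A v = some w) : TransGen u.Step v w ∧ w ∈ A := by
  have main : ∀ N v, u.hgt v < N → v ∈ u.verts → ∀ w, u.nearestAnc A v = some w →
      TransGen u.Step v w ∧ w ∈ A := by
    intro N
    induction N with
    | zero => exact fun v h => absurd h (Nat.not_lt_zero _)
    | succ N ih =>
      intro v hN hv w hna
      cases hp : u.parent v with
      | none => rw [nearestAnc_none' hu hv hp] at hna; cases hna
      | some w' =>
        by_cases hw' : w' ∈ A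
        · rw [nearestAnc_memS hu hv hp hw'] at hna
          obtain rfl : w' = w := Option.some_inj.mp hna
          exact ⟨TransGen.single hp, hw'⟩
        · rw [nearestAnc_step hu hv hp hw'] at hna
          have hN' : u.hgt w' < N := lt_of_lt_of_le (hgt_step hu hp) (Nat.lt_succ_iff.mp hN)
          obtain ⟨ht, hA⟩ := ih w' hN' (step_mem' hu hp).2 w hna
          exact ⟨TransGen.head hp ht, hA⟩
  exact main (u.hgt v + 1) v (Nat.lt_succ_self _) hv w hna

theorem nearestAnc_none_spec (hu : u.WF) {v : ℕ} (hv : v ∈ u.verts)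
    (hna : u.nearestAnc A v = none) : ∀ z, TransGen u.Step v z → z ∉ A := by
  have main : ∀ N v, u.hgt v < N → v ∈ u.verts → u.nearestAnc A v = none →
      ∀ z, TransGen u.Step v z → z ∉ A := by
    intro N
    induction N with
    | zero => exact fun v h => absurd h (Nat.not_lt_zero _)
    | succ N ih =>
      intro v hN hv hna z htz
      obtain ⟨c, hc, hcz⟩ := transGen_head_decomp htz
      cases hp : u.parent v with
      | none => exact absurd hc (by rw [Step, hp]; simp)
      | some w' =>
        have hcw : c = w' := step_det hc hp
        rw [hcw] at hcz
        by_cases hw' : w' ∈ A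
        · rw [nearestAnc_memS hu hv hp hw'] at hna; cases hna
        · rw [nearestAnc_step hu hv hp hw'] at hna
          rcases reflTransGen_iff_eq_or_transGen.mp hcz with rfl | ht
          · exact hw'
          · exact ih w' (lt_of_lt_of_le (hgt_step hu hp) (Nat.lt_succ_iff.mp hN))
              (step_mem' hu hp).2 hna z ht
  exact main (u.hgt v + 1) v (Nat.lt_succ_self _) hv hna

theorem nearestAnc_first (hu : u.WF) {v w : ℕ} (hv : v ∈ u.verts)
    (hna : u.nearestAnc A v = some w) : ∀ z, TransGen u.Step v z → z ∈ A → u.Anc w z := by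
  have main : ∀ N v, u.hgt v < N → v ∈ u.verts → u.nearestAnc A v = some w →
      ∀ z, TransGen u.Step v z → z ∈ A → u.Anc w z := by
    intro N
    induction N with
    | zero => exact fun v h => absurd h (Nat.not_lt_zero _)
    | succ N ih =>
      intro v hN hv hna z htz hzA
      obtain ⟨c, hc, hcz⟩ := transGen_head_decomp htz
      cases hp : u.parent v with
      | none => exact absurd hc (by rw [Step, hp]; simp)
      | some w' =>
        have hcw : c = w' := step_det hc hp
        rw [hcw] at hcz
        by_cases hw' : w' ∈ A
        · rw [nearestAnc_memS hu hv hp hw'] at hna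
          obtain rfl : w' = w := Option.some_inj.mp hna
          exact hcz
        · rw [nearestAnc_step hu hv hp hw'] at hna
          rcases reflTransGen_iff_eq_or_transGen.mp hcz with rfl | ht
          · exact absurd hzA hw'
          · exact ih w' (lt_of_lt_of_le (hgt_step hu hp) (Nat.lt_succ_iff.mp hN))
              (step_mem' hu hp).2 hna z ht hzA
  exact main (u.hgt v + 1) v (Nat.lt_succ_self _) hv hna

theorem exists_sroot (hu : u.WF) {v : ℕ} (hvA : v ∈ A) (hv : v ∈ u.verts) :
    ∃ z ∈ A, u.Anc v z ∧ u.nearestAnc A z = none := by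
  have main : ∀ N v, u.hgt v < N → v ∈ A → v ∈ u.verts →
      ∃ z ∈ A, u.Anc v z ∧ u.nearestAnc A z = none := by
    intro N
    induction N with
    | zero => exact fun v h => absurd h (Nat.not_lt_zero _)
    | succ N ih =>
      intro v hN hvA hv
      cases hna : u.nearestAnc A v with
      | none => exact ⟨v, hvA, ReflTransGen.refl, hna⟩
      | some w =>
        obtain ⟨ht, hwA⟩ := nearestAnc_sound hu hv hna
        obtain ⟨z, hzA, hz1, hz2⟩ := ih w (lt_of_lt_of_le (hgt_transGen hu ht)
          (Nat.lt_succ_iff.mp hN)) hwA (transGen_mem hu ht).2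
        exact ⟨z, hzA, ht.to_reflTransGen.trans hz1, hz2⟩
  exact main (u.hgt v + 1) v (Nat.lt_succ_self _) hvA hv

theorem exists_root (hu : u.WF) {v : ℕ} (hv : v ∈ u.verts) :
    ∃ z, u.Anc v z ∧ u.parent z = none := by
  have main : ∀ N v, u.hgt v < N → v ∈ u.verts → ∃ z, u.Anc v z ∧ u.parent z = none := by
    intro N
    induction N with
    | zero => exact fun v h => absurd h (Nat.not_lt_zero _)
    | succ N ih =>
      intro v hN hv
      cases hp : u.parent v with
      | none => exact ⟨v, ReflTransGen.refl, hp⟩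
      | some w =>
        obtain ⟨z, hz1, hz2⟩ := ih w (lt_of_lt_of_le (hgt_step hu hp) (Nat.lt_succ_iff.mp hN))
          (step_mem' hu hp).2
        exact ⟨z, ReflTransGen.head hp hz1, hz2⟩
  exact main (u.hgt v + 1) v (Nat.lt_succ_self _) hv

theorem lastBefore_spec (hu : u.WF) {v w : ℕ} (hv : v ∈ u.verts)
    (hna : u.nearestAnc A v = some w) :
    u.Anc v (u.lastBefore A v) ∧ u.Step (u.lastBefore A v) w ∧
      (u.lastBefore A v = v ∨ u.lastBefore A v ∉ A) := by
  have main : ∀ N v, u.hgt v < N → v ∈ u.verts → u.nearestAnc A v = some w →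
      u.Anc v (u.lastBefore A v) ∧ u.Step (u.lastBefore A v) w ∧
        (u.lastBefore A v = v ∨ u.lastBefore A v ∉ A) := by
    intro N
    induction N with
    | zero => exact fun v h => absurd h (Nat.not_lt_zero _)
    | succ N ih =>
      intro v hN hv hna
      cases hp : u.parent v with
      | none => rw [nearestAnc_none' hu hv hp] at hna; cases hna
      | some w' =>
        by_cases hw' : w' ∈ A
        · rw [nearestAnc_memS hu hv hp hw'] at hna
          obtain rfl : w' = w := Option.some_inj.mp hna
          rw [lastBefore_memS hu hv hp hw']
          exact ⟨ReflTransGen.refl, hp, Or.inl rfl⟩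
        · rw [nearestAnc_step hu hv hp hw'] at hna
          rw [lastBefore_step hu hv hp hw']
          obtain ⟨ha, hs, ho⟩ := ih w' (lt_of_lt_of_le (hgt_step hu hp) (Nat.lt_succ_iff.mp hN))
            (step_mem' hu hp).2 hna
          refine ⟨ReflTransGen.head hp ha, hs, Or.inr ?_⟩
          rcases ho with he | hno
          · rw [he]; exact hw'
          · exact hno
  exact main (u.hgt v + 1) v (Nat.lt_succ_self _) hv hna

theorem lastBefore_verts (hu : u.WF) {v : ℕ} (hv : v ∈ u.verts) :
    u.lastBefore u.verts v = v := by
  cases hp : u.parent v with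
  | none => exact lastBefore_none' hu hv hp
  | some w => exact lastBefore_memS hu hv hp (step_mem' hu hp).2

theorem nearestAnc_verts (hu : u.WF) {v w : ℕ} (hv : v ∈ u.verts)
    (hp : u.parent v = some w) : u.nearestAnc u.verts v = some w :=
  nearestAnc_memS hu hv hp (step_mem' hu hp).2

theorem anc_total (hu : u.WF) {v a : ℕ} (ha : u.Anc v a) :
    ∀ {b : ℕ}, u.Anc v b → u.Anc a b ∨ u.Anc b a := by
  induction ha using Relation.ReflTransGen.head_induction_on with
  | refl => exact fun hb => Or.inl hb
  | head hstep htail ih =>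
    intro b hb
    rcases reflTransGen_iff_eq_or_transGen.mp hb with rfl | htb
    · exact Or.inr (ReflTransGen.head hstep htail)
    · obtain ⟨c, hc, hcb⟩ := transGen_head_decomp htb
      obtain rfl := step_det hc hstep
      exact ih hcb

theorem slim_contra (hu : u.WF) (hslim : u.Slim) {a b v : ℕ} (ha : u.Step a v)
    (hb : u.Step b v) (hc : u.color a = u.color b) (hne : a ≠ b) : False := by
  have hv := (step_mem' hu ha).2
  have h1 := hslim v hv (u.color a)
  have h2 : 1 < (u.verts.filter fun x => u.parent x = some v ∧ u.color x = u.color a).card :=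
    Finset.one_lt_card.mpr ⟨a, Finset.mem_filter.mpr ⟨(step_mem' hu ha).1, ha, rfl⟩,
      b, Finset.mem_filter.mpr ⟨(step_mem' hu hb).1, hb, hc.symm⟩, hne⟩
  omega

/-- all "crossing" edges out of `A` below an `A`-vertex have the same color. -/
def CrossEq (u : PForest n) (A : Finset ℕ) : Prop :=
  ∀ x w x' w', (∃ v ∈ A, u.Anc v x) → u.Step x w → w ∉ A →
    (∃ v ∈ A, u.Anc v x') → u.Step x' w' → w' ∉ A → u.color x = u.color x'

theorem crossing_merge (hu : u.WF) (hslim : u.Slim) (hcol : CrossEq u A)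
    {x1 x2 y : ℕ} (hx1A : x1 ∈ A) (hx2A : x2 ∈ A)
    (hx1v : x1 ∈ u.verts) (hx2v : x2 ∈ u.verts) (hne : x1 ≠ x2)
    (hy1 : u.Anc x1 y) (hy2 : u.Anc x2 y)
    (hmid : ∀ m, (TransGen u.Step x1 m ∨ TransGen u.Step x2 m) → u.Anc m y → m ∉ A) :
    False := by
  classical
  have hyv : y ∈ u.verts := anc_mem hu hx1v hy1
  set M := u.verts.filter (fun m => u.Anc x1 m ∧ u.Anc x2 m) with hM
  have hyM : y ∈ M := Finset.mem_filter.mpr ⟨hyv, hy1, hy2⟩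
  obtain ⟨m, hmM, hmax⟩ := M.exists_max_image u.hgt ⟨y, hyM⟩
  rw [hM, Finset.mem_filter] at hmM
  obtain ⟨hmv, hm1, hm2⟩ := hmM
  have hdom : ∀ m', u.Anc x1 m' → u.Anc x2 m' → u.Anc m m' := by
    intro m' h1' h2'
    have hm'v : m' ∈ u.verts := anc_mem hu hx1v h1'
    have hle : u.hgt m' ≤ u.hgt m := hmax m' (by rw [hM, Finset.mem_filter]; exact ⟨hm'v, h1', h2'⟩)
    rcases anc_total hu hm1 h1' with h | h
    · exact h
    · rcases reflTransGen_iff_eq_or_transGen.mp h with rfl | ht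
      · exact ReflTransGen.refl
      · exact absurd (hgt_transGen hu ht) (not_lt.mpr hle)
  have hmy : u.Anc m y := hdom y hy1 hy2
  have hmx1 : m ≠ x1 := by
    rintro rfl
    rcases reflTransGen_iff_eq_or_transGen.mp hm2 with h | h
    · exact hne h
    · exact hmid m (Or.inr h) hy1 hx1A
  have hmx2 : m ≠ x2 := by
    rintro rfl
    rcases reflTransGen_iff_eq_or_transGen.mp hm1 with h | h
    · exact hne h.symm
    · exact hmid m (Or.inl h) hy2 hx2A
  have ht1 : TransGen u.Step x1 m := by
    rcases reflTransGen_iff_eq_or_transGen.mp hm1 with h | h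
    · exact absurd h hmx1
    · exact h
  have ht2 : TransGen u.Step x2 m := by
    rcases reflTransGen_iff_eq_or_transGen.mp hm2 with h | h
    · exact absurd h hmx2
    · exact h
  have hmA : m ∉ A := hmid m (Or.inl ht1) hmy
  obtain ⟨z1, hz1a, hz1s⟩ := Relation.TransGen.tail'_iff.mp ht1
  obtain ⟨z2, hz2a, hz2s⟩ := Relation.TransGen.tail'_iff.mp ht2
  have hzne : z1 ≠ z2 := by
    rintro rfl
    have hz : u.Anc m z1 := hdom z1 hz1a hz2a
    rcases reflTransGen_iff_eq_or_transGen.mp hz with rfl | h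
    · exact transGen_irrefl hu z1 (TransGen.single hz1s)
    · exact transGen_irrefl hu m (h.tail hz1s)
  have hc : u.color z1 = u.color z2 :=
    hcol z1 m z2 m ⟨x1, hx1A, hz1a⟩ hz1s hmA ⟨x2, hx2A, hz2a⟩ hz2s hmA
  exact slim_contra hu hslim hz1s hz2s hc hzne

theorem rootCount_le_one (hu : u.WF) (htree : u.IsTree) (hslim : u.Slim)
    (hA : A ⊆ u.verts) (hcol : CrossEq u A) : u.rootCount A ≤ 1 := by
  by_contra h
  unfold rootCount at h
  obtain ⟨r1, h1', r2, h2', hne⟩ := Finset.one_lt_card.mp (not_le.mp h)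
  obtain ⟨hr1A, hr1n⟩ := Finset.mem_filter.mp h1'
  obtain ⟨hr2A, hr2n⟩ := Finset.mem_filter.mp h2'
  have hr1v := hA hr1A
  have hr2v := hA hr2A
  obtain ⟨p1, hp1a, hp1r⟩ := exists_root hu hr1v
  obtain ⟨p2, hp2a, hp2r⟩ := exists_root hu hr2v
  have hpp : p1 = p2 := by
    unfold IsTree at htree
    exact Finset.card_le_one.mp (le_of_eq htree) _
      (Finset.mem_filter.mpr ⟨anc_mem hu hr1v hp1a, hp1r⟩) _
      (Finset.mem_filter.mpr ⟨anc_mem hu hr2v hp2a, hp2r⟩)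
  subst hpp
  refine crossing_merge hu hslim hcol hr1A hr2A hr1v hr2v hne hp1a hp2a ?_
  intro m hor _
  rcases hor with h' | h'
  · exact nearestAnc_none_spec hu hr1v hr1n m h'
  · exact nearestAnc_none_spec hu hr2v hr2n m h'

theorem slim_restrict (hu : u.WF) (hslim : u.Slim) (hcol : CrossEq u A) :
    (u.restrict A).Slim := by
  intro v hv j
  by_contra hcard
  obtain ⟨x1, hx1, x2, hx2, hxne⟩ := Finset.one_lt_card.mp (not_le.mp hcard)
  simp only [Finset.mem_filter] at hx1 hx2
  simp only [restrict] at hx1 hx2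
  obtain ⟨hx1i, hp1, hc1⟩ := hx1
  obtain ⟨hx2i, hp2, hc2⟩ := hx2
  rw [if_pos hx1i] at hp1
  rw [if_pos hx2i] at hp2
  obtain ⟨hx1A, hx1v⟩ := Finset.mem_inter.mp hx1i
  obtain ⟨hx2A, hx2v⟩ := Finset.mem_inter.mp hx2i
  obtain ⟨ha1, hs1, _⟩ := lastBefore_spec hu hx1v hp1
  obtain ⟨ha2, hs2, _⟩ := lastBefore_spec hu hx2v hp2
  by_cases hyy : u.lastBefore A x1 = u.lastBefore A x2
  · -- merge case
    refine crossing_merge hu hslim hcol hx1A hx2A hx1v hx2v hxne ha1 (hyy ▸ ha2) ?_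
    intro m hor hmy hmA
    have hvm : u.Anc v m := by
      rcases hor with h' | h'
      · exact nearestAnc_first hu hx1v hp1 m h' hmA
      · exact nearestAnc_first hu hx2v hp2 m h' hmA
    have hmv : u.Anc m v := hmy.tail hs1
    rcases reflTransGen_iff_eq_or_transGen.mp hvm with rfl | hT
    · exact transGen_irrefl hu _ (Relation.TransGen.tail' hmy hs1)
    · rcases reflTransGen_iff_eq_or_transGen.mp hmv with rfl | hT'
      · exact transGen_irrefl hu _ hT
      · exact transGen_irrefl hu v (hT.trans hT')
  · -- two distinct incoming ambient edges of the same color at v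
    exact slim_contra hu hslim hs1 hs2 (hc1.trans hc2.symm) hyy

theorem sroots_eq (hu : u.WF) (hA : A ⊆ u.verts) :
    u.sroots A = A.filter fun x => u.nearestAnc A x = none := by
  unfold sroots
  ext x
  simp only [Finset.mem_filter]
  constructor
  · rintro ⟨hxA, hall⟩
    refine ⟨hxA, ?_⟩
    cases hna : u.nearestAnc A x with
    | none => rfl
    | some w =>
      obtain ⟨ht, hwA⟩ := nearestAnc_sound hu (hA hxA) hna
      have hwx := hall w hwA ht.to_reflTransGen
      exact absurd (hwx ▸ ht) (transGen_irrefl hu x)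
  · rintro ⟨hxA, hna⟩
    refine ⟨hxA, fun w hwA haw => ?_⟩
    rcases reflTransGen_iff_eq_or_transGen.mp haw with h | ht
    · exact h
    · exact absurd hwA (nearestAnc_none_spec hu (hA hxA) hna w ht)

theorem compSet_eq (hu : u.WF) {r : ℕ} (hA : A ⊆ u.verts)
    (hr : (A.filter fun x => u.nearestAnc A x = none) = {r}) : u.compSet A r = A := by
  unfold compSet
  apply Finset.filter_true_of_mem
  intro x hx
  obtain ⟨z, hzA, hxz, hzn⟩ := exists_sroot hu hx (hA hx)
  have hz : z ∈ ({r} : Finset ℕ) := hr ▸ Finset.mem_filter.mpr ⟨hzA, hzn⟩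
  have hzr : z = r := Finset.mem_singleton.mp hz
  exact hzr ▸ hxz

theorem restrict_wf (hu : u.WF) (A : Finset ℕ) : (u.restrict A).WF := by
  constructor
  · intro v w h
    simp only [restrict] at h ⊢
    by_cases hv : v ∈ A ∩ u.verts
    · rw [if_pos hv] at h
      obtain ⟨ht, hwA⟩ := nearestAnc_sound hu (Finset.mem_inter.mp hv).2 h
      exact ⟨hv, Finset.mem_inter.mpr ⟨hwA, (transGen_mem hu ht).2⟩⟩
    · rw [if_neg hv] at h
      cases h
  · obtain ⟨rk, hrk⟩ := hu.2
    refine ⟨rk, fun v w h => ?_⟩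
    simp only [restrict] at h
    by_cases hv : v ∈ A ∩ u.verts
    · rw [if_pos hv] at h
      exact rk_lt hrk (nearestAnc_sound hu (Finset.mem_inter.mp hv).2 h).1
    · rw [if_neg hv] at h
      cases h

theorem restrict_isTree (hu : u.WF) (hA : A ⊆ u.verts) (hne : A.Nonempty)
    (hle : (A.filter fun x => u.nearestAnc A x = none).card ≤ 1) :
    (u.restrict A).IsTree := by
  unfold IsTree
  have hset : ((u.restrict A).verts.filter fun v => (u.restrict A).parent v = none)
      = A.filter fun x => u.nearestAnc A x = none := by
    ext x
    simp only [Finset.mem_filter]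
    simp only [restrict]
    constructor
    · rintro ⟨hxi, hp⟩
      rw [if_pos hxi] at hp
      exact ⟨(Finset.mem_inter.mp hxi).1, hp⟩
    · rintro ⟨hxA, hp⟩
      have hxi : x ∈ A ∩ u.verts := Finset.mem_inter.mpr ⟨hxA, hA hxA⟩
      exact ⟨hxi, by rw [if_pos hxi]; exact hp⟩
  rw [hset]
  obtain ⟨a, haA⟩ := hne
  obtain ⟨z, hzA, _, hzn⟩ := exists_sroot hu haA (hA haA)
  have hpos : 0 < (A.filter fun x => u.nearestAnc A x = none).card :=
    Finset.card_pos.mpr ⟨z, Finset.mem_filter.mpr ⟨hzA, hzn⟩⟩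
  omega

theorem crossing_color {K : Type*} [Field K] (q : Fin n → K) (hu : u.WF)
    (hf : (∏ j : Fin n, q j ^ ∑ v ∈ A, u.pcount u.verts A j v) ≠ 0)
    {v x w : ℕ} (hvA : v ∈ A) (hax : u.Anc v x) (hs : u.Step x w) (hw : w ∉ A) :
    q (u.color x) ≠ 0 := by
  intro h0
  have hjne : q (u.color x) ^ (∑ v' ∈ A, u.pcount u.verts A (u.color x) v') ≠ 0 :=
    Finset.prod_ne_zero_iff.mp hf (u.color x) (Finset.mem_univ _)
  have hxv : x ∈ u.verts := (step_mem' hu hs).1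
  have hpos : 0 < u.pcount u.verts A (u.color x) v := by
    unfold pcount
    refine Finset.card_pos.mpr ⟨x, Finset.mem_filter.mpr ⟨hxv, hax, ?_, w, ?_, hw⟩⟩
    · rw [lastBefore_verts hu hxv]
    · exact nearestAnc_verts hu hxv hs
  have hsum : 0 < ∑ v' ∈ A, u.pcount u.verts A (u.color x) v' :=
    lt_of_lt_of_le hpos (Finset.single_le_sum (fun i _ => Nat.zero_le _) hvA)
  rw [h0, zero_pow hsum.ne'] at hjne
  exact hjne rfl

theorem part1_main {K : Type*} [Field K] (q1 q2 : Fin n → K)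
    (h1 : ∀ j j' : Fin n, q1 j ≠ 0 → q1 j' ≠ 0 → j = j')
    (h2 : ∀ j j' : Fin n, q2 j ≠ 0 → q2 j' ≠ 0 → j = j')
    (hu : u.WF) (htree : u.IsTree) (hslim : u.Slim)
    {S : Finset ℕ} (hS : S ⊆ u.verts) (hq : qcoef K q1 q2 u u.verts S ≠ 0) :
    u.rootCount S ≤ 1 ∧ u.rootCount (u.verts \ S) ≤ 1 ∧
      (u.restrict S).Slim ∧ (u.restrict (u.verts \ S)).Slim := by
  unfold qcoef at hq
  obtain ⟨hf1, hf2⟩ := mul_ne_zero_iff.mp hq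
  have hcol1 : CrossEq u S := by
    intro x w x' w' hvx hs hw hvx' hs' hw'
    obtain ⟨v, hvA, hax⟩ := hvx
    obtain ⟨v', hvA', hax'⟩ := hvx'
    exact h1 _ _ (crossing_color q1 hu hf1 hvA hax hs hw)
      (crossing_color q1 hu hf1 hvA' hax' hs' hw')
  have hcol2 : CrossEq u (u.verts \ S) := by
    intro x w x' w' hvx hs hw hvx' hs' hw'
    obtain ⟨v, hvA, hax⟩ := hvx
    obtain ⟨v', hvA', hax'⟩ := hvx'
    exact h2 _ _ (crossing_color q2 hu hf2 hvA hax hs hw)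
      (crossing_color q2 hu hf2 hvA' hax' hs' hw')
  exact ⟨rootCount_le_one hu htree hslim hS hcol1,
    rootCount_le_one hu htree hslim Finset.sdiff_subset hcol2,
    slim_restrict hu hslim hcol1, slim_restrict hu hslim hcol2⟩

theorem piso_symm {s t : PForest n} (ht : t.WF) (h : s.PIso t) : t.PIso s := by
  obtain ⟨e, he1, he2⟩ := h
  refine ⟨e.symm, fun v w => ?_, fun v hv => ?_⟩
  · have h' := he1 (e.symm v) (e.symm w)
    simp only [Equiv.apply_symm_apply] at h'
    exact h'.symm
  · obtain ⟨w, hw⟩ := Option.isSome_iff_exists.mp hv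
    have hwv : w ∈ t.verts := (ht.1 _ _ hw).2
    have hp : s.parent ((e.symm v : ℕ)) = some ((e.symm ⟨w, hwv⟩ : ℕ)) := by
      have h' := he1 (e.symm v) (e.symm ⟨w, hwv⟩)
      simp only [Equiv.apply_symm_apply] at h'
      exact h'.mpr hw
    have h2 := he2 (e.symm v) (by rw [hp]; rfl)
    simp only [Equiv.apply_symm_apply] at h2
    exact h2.symm

theorem slim_of_piso {s t : PForest n} (h : s.PIso t) (hsl : s.Slim) : t.Slim := by
  classical
  obtain ⟨e, he1, he2⟩ := h
  intro v hv j
  have key : (t.verts.filter fun x => t.parent x = some v ∧ t.color x = j).card ≤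
      (s.verts.filter fun x =>
        s.parent x = some ((e.symm ⟨v, hv⟩ : ℕ)) ∧ s.color x = j).card := by
    apply Finset.card_le_card_of_injOn
      (fun x => if hx : x ∈ t.verts then ((e.symm ⟨x, hx⟩ : ℕ)) else 0)
    · intro x hx
      obtain ⟨hxv, hp, hc⟩ := Finset.mem_filter.mp hx
      simp only [dif_pos hxv]
      have hps : s.parent ((e.symm ⟨x, hxv⟩ : ℕ)) = some ((e.symm ⟨v, hv⟩ : ℕ)) := by
        have h' := he1 (e.symm ⟨x, hxv⟩) (e.symm ⟨v, hv⟩)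
        simp only [Equiv.apply_symm_apply] at h'
        exact h'.mpr hp
      refine Finset.mem_filter.mpr ⟨(e.symm ⟨x, hxv⟩).2, hps, ?_⟩
      have h2 := he2 (e.symm ⟨x, hxv⟩) (by rw [hps]; rfl)
      simp only [Equiv.apply_symm_apply] at h2
      rw [← h2]
      exact hc
    · intro a ha b hb hab
      have hav := (Finset.mem_filter.mp (Finset.mem_coe.mp ha)).1
      have hbv := (Finset.mem_filter.mp (Finset.mem_coe.mp hb)).1
      simp only at hab
      rw [dif_pos hav, dif_pos hbv] at hab
      have h3 := e.symm.injective (Subtype.ext hab)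
      exact congrArg Subtype.val h3
  have h4 := hsl ((e.symm ⟨v, hv⟩ : ℕ)) (e.symm ⟨v, hv⟩).2 j
  omega

end PForest

open PForest in
theorem slim_out {n : ℕ} {T : TreeClass n} (hT : IsSlimClass T) : (Quot.out T).1.Slim := by
  obtain ⟨a, ha, hmk⟩ := hT
  have heq : Quot.mk (fun a b : TreeObj n => PForest.PIso a.1 b.1) a
      = Quot.mk (fun a b : TreeObj n => PForest.PIso a.1 b.1) (Quot.out T) := by
    rw [hmk]; exact (Quot.out_eq T).symm
  have hE := Quot.eqvGen_exact heq
  have key : ∀ b c : TreeObj n, EqvGen (fun a b : TreeObj n => PForest.PIso a.1 b.1) b c →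
      (b.1.Slim ↔ c.1.Slim) := by
    intro b c h
    induction h with
    | rel x y hxy => exact ⟨fun hx => slim_of_piso hxy hx,
        fun hy => slim_of_piso (piso_symm y.2.1 hxy) hy⟩
    | refl x => exact Iff.rfl
    | symm x y _ ih => exact ih.symm
    | trans x y z _ _ ih1 ih2 => exact ih1.trans ih2
  exact (key _ _ hE).mp ha

open PForest in
theorem forestMonomial_mem (K : Type*) [Field K] {n : ℕ} [NeZero n] {u : PForest n}
    (hu : u.WF) {A : Finset ℕ} (hA : A ⊆ u.verts)
    (hroots : u.rootCount A ≤ 1) (hslimA : (u.restrict A).Slim) :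
    forestMonomial K u A ∈ slimSpan K n := by
  unfold rootCount at hroots
  unfold forestMonomial
  have hsr := sroots_eq hu hA
  have hcard : (PForest.sroots u A).card ≤ 1 := by rw [hsr]; exact hroots
  rcases Nat.le_one_iff_eq_zero_or_eq_one.mp hcard with h0 | h1
  · rw [Finset.card_eq_zero.mp h0, Finset.prod_empty]
    exact Submodule.subset_span (Set.mem_union_left _ rfl)
  · obtain ⟨r, hr⟩ := Finset.card_eq_one.mp h1
    rw [hr, Finset.prod_singleton]
    have hfilt : (A.filter fun x => u.nearestAnc A x = none) = {r} := hsr.symm.trans hr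
    rw [compSet_eq hu hA hfilt]
    have hrA : r ∈ A := by
      have hrs : r ∈ PForest.sroots u A := by rw [hr]; exact Finset.mem_singleton_self r
      rw [hsr] at hrs
      exact (Finset.mem_filter.mp hrs).1
    have hwt : (u.restrict A).WF ∧ (u.restrict A).IsTree :=
      ⟨restrict_wf hu A, restrict_isTree hu hA ⟨r, hrA⟩ hroots⟩
    rw [show mkClass (u.restrict A) = Quot.mk _ (⟨u.restrict A, hwt⟩ : TreeObj n) from dif_pos hwt]
    exact Submodule.subset_span
      (Set.mem_union_right _ ⟨_, ⟨⟨u.restrict A, hwt⟩, hslimA, rfl⟩, rfl⟩)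

open PForest in
theorem subforestSum_mem (K : Type*) [Field K] {n : ℕ} [NeZero n] (q1 q2 : Fin n → K)
    (h1 : ∀ j j' : Fin n, q1 j ≠ 0 → q1 j' ≠ 0 → j = j')
    (h2 : ∀ j j' : Fin n, q2 j ≠ 0 → q2 j' ≠ 0 → j = j')
    (u : PForest n) (hu : u.WF) (htree : u.IsTree) (hslim : u.Slim) :
    subforestSum K q1 q2 u ∈ LinearMap.range
      (TensorProduct.map (slimSpan K n).subtype (slimSpan K n).subtype) := by
  unfold subforestSum
  apply Submodule.sum_mem
  intro S hS
  by_cases hq : qcoef K q1 q2 u u.verts S = 0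
  · rw [hq, zero_smul]
    exact Submodule.zero_mem _
  · have hSv : S ⊆ u.verts := Finset.mem_powerset.mp hS
    obtain ⟨hr1, hr2, hsl1, hsl2⟩ := part1_main q1 q2 h1 h2 hu htree hslim hSv hq
    have hm1 : forestMonomial K u S ∈ slimSpan K n := forestMonomial_mem K hu hSv hr1 hsl1
    have hm2 : forestMonomial K u (u.verts \ S) ∈ slimSpan K n :=
      forestMonomial_mem K hu Finset.sdiff_subset hr2 hsl2
    refine Submodule.smul_mem _ _ (LinearMap.mem_range.mpr
      ⟨(⟨_, hm1⟩ : slimSpan K n) ⊗ₜ[K] (⟨_, hm2⟩ : slimSpan K n), ?_⟩)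
    simp [TensorProduct.map_tmul]

end AuxDev

theorem slim_trees_preserved (K : Type*) [Field K] (n : ℕ) [NeZero n]
    (q1 q2 : Fin n → K)
    (h1 : ∀ j j' : Fin n, q1 j ≠ 0 → q1 j' ≠ 0 → j = j')
    (h2 : ∀ j j' : Fin n, q2 j ≠ 0 → q2 j' ≠ 0 → j = j')
    (u : PForest n) (hu : u.WF) (htree : u.IsTree) (hslim : u.Slim) :
    -- every subforest with nonzero coefficient, and its complement, are
    -- connected and slim
    (∀ S ⊆ u.verts, qcoef K q1 q2 u u.verts S ≠ 0 →
      u.rootCount S ≤ 1 ∧ u.rootCount (u.verts \ S) ≤ 1 ∧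
        (u.restrict S).Slim ∧ (u.restrict (u.verts \ S)).Slim) ∧
    -- consequently Δ restricts to the span of 1 and the slim trees
    (∀ x ∈ slimSpan K n, DeltaC K q1 q2 x ∈
        LinearMap.range
          (TensorProduct.map (slimSpan K n).subtype (slimSpan K n).subtype)) := by
  constructor
  · intro S hS hq
    exact PForest.part1_main q1 q2 h1 h2 hu htree hslim hS hq
  · intro x hx
    have hx' : x ∈ Submodule.span K
        ({1} ∪ {p | ∃ T : TreeClass n, IsSlimClass T ∧ p = MvPolynomial.X T}) := hx
    clear hx
    induction hx' using Submodule.span_induction with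
    | mem p hp =>
      rcases hp with hp | ⟨T, hT, rfl⟩
      · have hp1 : p = 1 := hp
        subst hp1
        rw [map_one]
        have hone : (1 : Cn K n) ∈ slimSpan K n :=
          Submodule.subset_span (Set.mem_union_left _ rfl)
        exact LinearMap.mem_range.mpr
          ⟨(⟨1, hone⟩ : slimSpan K n) ⊗ₜ[K] (⟨1, hone⟩ : slimSpan K n),
            by simp [Algebra.TensorProduct.one_def]⟩
      · have hDX : DeltaC K q1 q2 (MvPolynomial.X T)
            = subforestSum K q1 q2 (Quot.out T).1 := by
          simp [DeltaC]
        rw [hDX]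
        exact subforestSum_mem K q1 q2 h1 h2 _ (Quot.out T).2.1 (Quot.out T).2.2 (slim_out hT)
    | zero => rw [map_zero]; exact Submodule.zero_mem _
    | add y z hy hz ihy ihz => rw [map_add]; exact Submodule.add_mem _ ihy ihz
    | smul a y hy ihy => rw [map_smul]; exact Submodule.smul_mem _ a ihy
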